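/- There exists a real constant C > 0 such that for all natural numbers n ≥ 2, the number of additive subgroups Δ of ℝ with c(ℤ, Δ) ≤ n is at most C · n · Real.log n, where ℤ denotes the additive subgroup of ℝ generated by 1. -/

import Mathlib

/-- The commensurability index of two additive subgroups `A`, `B`:
`c(A,B) = [A : A ⊓ B] * [B : A ⊓ B]`. Following Mathlib's convention for
`AddSubgroup.relIndex`, a value of `0` means the index is infinite. -/
noncomputable def addCommIndex {G : Type*} [AddGroup G] (A B : AddSubgroup G) : ℕ :=
  (A ⊓ B).relIndex A * (A ⊓ B).relIndex B

open AddSubgroup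

lemma zmult_neg (g : ℝ) : zmultiples (-g) = zmultiples g := by
  ext x
  simp only [mem_zmultiples_iff]
  constructor
  · rintro ⟨k, rfl⟩; exact ⟨-k, by simp⟩
  · rintro ⟨k, rfl⟩; exact ⟨-k, by simp⟩

private lemma relindex_map_equiv (e : ℝ ≃+ ℝ) (H K : AddSubgroup ℝ) :
    (H.map e.toAddMonoidHom).relIndex (K.map e.toAddMonoidHom) = H.relIndex K := by
  have h1 : H.map e.toAddMonoidHom = comap e.symm.toAddMonoidHom H := by
    ext x
    simp only [mem_map, mem_comap]
    constructor
    · rintro ⟨y, hy, rfl⟩; simpa using hy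
    · intro hx; exact ⟨e.symm x, hx, by simp⟩
  have h2 : (K.map e.toAddMonoidHom).map e.symm.toAddMonoidHom = K := by
    ext x
    simp only [mem_map]
    constructor
    · rintro ⟨y, ⟨z, hz, rfl⟩, rfl⟩; simpa using hz
    · intro hx; exact ⟨e x, ⟨x, hx, rfl⟩, by simp⟩
  rw [h1, relIndex_comap, h2]

private lemma relindex_nat (m : ℕ) :
    (zmultiples ((m:ℝ))).relIndex (zmultiples (1:ℝ)) = m := by
  have hcomap : comap (Int.castAddHom ℝ) (zmultiples ((m:ℝ))) = zmultiples (m:ℤ) := by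
    ext k
    simp only [mem_comap, mem_zmultiples_iff, Int.coe_castAddHom, Int.mem_zmultiples_iff]
    simp only [zsmul_eq_mul]
    constructor
    · rintro ⟨j, hj⟩
      exact ⟨j, by exact_mod_cast hj⟩
    · rintro ⟨j, hj⟩
      exact ⟨j, by exact_mod_cast hj⟩
  have h := relIndex_comap (zmultiples ((m:ℝ))) (Int.castAddHom ℝ) ⊤
  rw [hcomap, relIndex_top_right, Int.index_zmultiples] at h
  rw [← AddMonoidHom.range_eq_map, Int.range_castAddHom] at h
  simpa using h.symm

private lemma relindex_scale (g : ℝ) (hg : g ≠ 0) (c d : ℝ) :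
    (zmultiples (g*c)).relIndex (zmultiples (g*d)) = (zmultiples c).relIndex (zmultiples d) := by
  set e : ℝ ≃+ ℝ := (AddAut.mulLeft (Units.mk0 g hg) : AddAut ℝ)
  have hc : zmultiples (g*c) = (zmultiples c).map e.toAddMonoidHom := by
    rw [AddMonoidHom.map_zmultiples]; rfl
  have hd : zmultiples (g*d) = (zmultiples d).map e.toAddMonoidHom := by
    rw [AddMonoidHom.map_zmultiples]; rfl
  rw [hc, hd, relindex_map_equiv]

private lemma relindex_div (p q : ℕ) (hp : 0 < p) (hq : 0 < q) :
    (zmultiples ((p:ℝ))).relIndex (zmultiples ((p:ℝ)/q)) = q := by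
  have hq0 : (q:ℝ) ≠ 0 := Nat.cast_ne_zero.mpr hq.ne'
  have hg : ((p:ℝ)/q) ≠ 0 := by positivity
  have e1 : zmultiples ((p:ℝ)) = zmultiples (((p:ℝ)/q) * q) := by
    rw [div_mul_cancel₀ _ hq0]
  have e2 : zmultiples ((p:ℝ)/q) = zmultiples (((p:ℝ)/q) * 1) := by rw [mul_one]
  rw [e1, e2, relindex_scale _ hg, relindex_nat]

private lemma inf_zmultiples (p q : ℕ) (hp : 0 < p) (hq : 0 < q) (hco : Nat.Coprime p q) :
    zmultiples (1:ℝ) ⊓ zmultiples ((p:ℝ)/q) = zmultiples ((p:ℝ)) := by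
  have hq0 : (q:ℝ) ≠ 0 := Nat.cast_ne_zero.mpr hq.ne'
  ext x
  simp only [AddSubgroup.mem_inf, mem_zmultiples_iff, zsmul_eq_mul]
  constructor
  · rintro ⟨⟨m, hm⟩, ⟨l, hl⟩⟩
    rw [mul_one] at hm
    subst hm
    have hmq : (m:ℝ) * q = l * p := by
      field_simp at hl
      linarith
    have hmq' : m * (q:ℤ) = l * p := by exact_mod_cast hmq
    have hdvd : (p:ℤ) ∣ m := by
      have h1 : (p:ℤ) ∣ m * q := ⟨l, by linarith⟩
      refine Int.dvd_of_dvd_mul_left_of_gcd_one h1 ?_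
      rw [Int.gcd_natCast_natCast]
      exact hco
    obtain ⟨t, rfl⟩ := hdvd
    exact ⟨t, by push_cast; ring⟩
  · rintro ⟨t, rfl⟩
    refine ⟨⟨t * p, by push_cast; ring⟩, ⟨t * q, ?_⟩⟩
    push_cast
    field_simp

private lemma nsmul_relindex_mem (K H : AddSubgroup ℝ) {x : ℝ} (hx : x ∈ H) :
    K.relIndex H • x ∈ K := by
  have h := AddSubgroup.nsmul_index_mem (K.addSubgroupOf H) (⟨x, hx⟩ : H)
  rw [AddSubgroup.mem_addSubgroupOf] at h
  simpa [AddSubgroup.relIndex] using h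


private lemma structure_lemma (Δ : AddSubgroup ℝ)
    (h : addCommIndex (AddSubgroup.zmultiples (1 : ℝ)) Δ ≠ 0) :
    ∃ p q : ℕ, 0 < p ∧ 0 < q ∧
      addCommIndex (AddSubgroup.zmultiples (1 : ℝ)) Δ = p * q ∧
      Δ = zmultiples ((p:ℝ)/q) := by
  set H : AddSubgroup ℝ := zmultiples (1:ℝ) with hH
  set K : AddSubgroup ℝ := H ⊓ Δ with hK
  rw [addCommIndex] at h
  obtain ⟨ha, hb⟩ : K.relIndex H ≠ 0 ∧ K.relIndex Δ ≠ 0 := by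
    constructor <;> intro h0 <;> rw [h0] at h <;> simp at h
  set a : ℕ := K.relIndex H with haa
  set b : ℕ := K.relIndex Δ with hbb
  have hb0 : (0:ℝ) < b := Nat.cast_pos.mpr (Nat.pos_of_ne_zero hb)
  have hbne : ((b:ℕ):ℝ) ≠ 0 := hb0.ne'
  -- (a : ℝ) ∈ K
  have haK : (a:ℝ) ∈ K := by
    have h1 : (1:ℝ) ∈ H := mem_zmultiples (1:ℝ)
    have := nsmul_relindex_mem K H h1
    simpa [nsmul_eq_mul] using this
  -- b • x ∈ K for x ∈ Δ
  have hbK : ∀ x ∈ Δ, (b:ℝ) * x ∈ K := by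
    intro x hx
    have := nsmul_relindex_mem K Δ hx
    simpa [nsmul_eq_mul] using this
  -- elements of H are integers
  have hint : ∀ y ∈ H, ∃ k : ℤ, (k:ℝ) = y := by
    intro y hy
    obtain ⟨k, hk⟩ := mem_zmultiples_iff.mp hy
    exact ⟨k, by rw [zsmul_eq_mul, mul_one] at hk; exact hk⟩
  -- Δ is not dense
  have hnd : ¬ Dense (Δ : Set ℝ) := by
    intro hd
    obtain ⟨x, hxball, hxΔ⟩ := Metric.dense_iff.mp hd (1/(2*b)) (1/(2*b)) (by positivity)
    have hx1 : |x - 1/(2*b)| < 1/(2*b) := by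
      simpa [Real.dist_eq] using hxball
    rw [abs_lt] at hx1
    have hx0 : 0 < x := by linarith [hx1.1]
    have hxb : x < 1/b := by
      have := hx1.2
      have h2b : 1/(2*(b:ℝ)) + 1/(2*(b:ℝ)) = 1/(b:ℝ) := by
        rw [← add_div, one_add_one_eq_two,
          div_eq_div_iff (by positivity : (0:ℝ) < 2*(b:ℝ)).ne' hbne]
        ring
      linarith
    obtain ⟨k, hk⟩ := hint _ ((inf_le_left : K ≤ H) (hbK x hxΔ))
    have hk0 : (0:ℝ) < k := by rw [hk]; positivity
    have hk1 : (k:ℝ) < 1 := by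
      rw [hk]
      calc (b:ℝ) * x < b * (1/b) := by
            exact mul_lt_mul_of_pos_left hxb hb0
        _ = 1 := by field_simp
    have : (0:ℤ) < k := by exact_mod_cast hk0
    have : k < 1 := by exact_mod_cast hk1
    omega
  -- Δ is cyclic
  obtain ⟨g, hg⟩ := (AddSubgroup.dense_or_cyclic Δ).resolve_left hnd
  rw [← zmultiples_eq_closure] at hg
  have hgne : g ≠ 0 := by
    rintro rfl
    have : (a:ℝ) ∈ Δ := (inf_le_right : K ≤ Δ) haK
    rw [hg] at this
    simp only [zmultiples_zero_eq_bot, AddSubgroup.mem_bot] at this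
    exact ha (by exact_mod_cast this)
  -- wlog g > 0
  obtain ⟨g, hgpos, hg⟩ : ∃ g : ℝ, 0 < g ∧ Δ = zmultiples g := by
    rcases hgne.lt_or_gt with hlt | hgt
    · exact ⟨-g, by linarith, by rw [hg, ← zmult_neg]⟩
    · exact ⟨g, hgt, hg⟩
  clear hgne
  -- b * g is a positive integer k
  have hgΔ : g ∈ Δ := hg ▸ mem_zmultiples g
  obtain ⟨k, hk⟩ := hint _ ((inf_le_left : K ≤ H) (hbK g hgΔ))
  have hkpos : (0:ℤ) < k := by
    have : (0:ℝ) < k := by rw [hk]; positivity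
    exact_mod_cast this
  set k' : ℕ := k.toNat with hk'
  have hk'k : ((k':ℕ):ℝ) = (k:ℝ) := by
    rw [hk']; exact_mod_cast congrArg (Int.cast : ℤ → ℝ) (Int.toNat_of_nonneg hkpos.le)
  have hk'pos : 0 < k' := by omega
  set d : ℕ := Nat.gcd k' b with hd
  have hdpos : 0 < d := Nat.gcd_pos_of_pos_left _ hk'pos
  set p : ℕ := k' / d with hpd
  set q : ℕ := b / d with hqd
  have hp : 0 < p := Nat.div_pos (Nat.le_of_dvd hk'pos (Nat.gcd_dvd_left _ _)) hdpos
  have hq : 0 < q := Nat.div_pos (Nat.le_of_dvd (Nat.pos_of_ne_zero hb) (Nat.gcd_dvd_right _ _)) hdpos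
  have hco : Nat.Coprime p q := Nat.coprime_div_gcd_div_gcd hdpos
  have hpk : p * d = k' := Nat.div_mul_cancel (Nat.gcd_dvd_left _ _)
  have hqb : q * d = b := Nat.div_mul_cancel (Nat.gcd_dvd_right _ _)
  have hq0 : (q:ℝ) ≠ 0 := Nat.cast_ne_zero.mpr hq.ne'
  -- g = p / q
  have hgpq : g = (p:ℝ)/q := by
    have h1 : (k':ℝ) = b * g := by rw [hk'k, hk]
    have h2 : (p:ℝ) * b = k' * q := by
      have : ((p * d : ℕ):ℝ) = (k':ℝ) := by exact_mod_cast congrArg (Nat.cast : ℕ → ℝ) hpk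
      have hb' : ((q * d : ℕ):ℝ) = (b:ℝ) := by exact_mod_cast congrArg (Nat.cast : ℕ → ℝ) hqb
      push_cast at this hb' ⊢
      nlinarith [this, hb']
    rw [eq_div_iff hq0]
    nlinarith [h1, h2]
  rw [hgpq] at hg
  refine ⟨p, q, hp, hq, ?_, hg⟩
  rw [addCommIndex, hg, hH, inf_zmultiples p q hp hq hco, relindex_nat, relindex_div p q hp hq]

private lemma count_bound (n : ℕ) :
    (((Finset.Icc 1 n ×ˢ Finset.Icc 1 n).filter (fun pq => pq.1 * pq.2 ≤ n)).card : ℝ)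
      ≤ n * (1 + Real.log n) := by
  set F := (Finset.Icc 1 n ×ˢ Finset.Icc 1 n).filter (fun pq => pq.1 * pq.2 ≤ n) with hF
  have hsub : F ⊆ (Finset.Icc 1 n).biUnion (fun a => ({a} : Finset ℕ) ×ˢ Finset.Icc 1 (n / a)) := by
    intro pq hpq
    rw [hF, Finset.mem_filter, Finset.mem_product, Finset.mem_Icc, Finset.mem_Icc] at hpq
    obtain ⟨⟨⟨ha1, ha2⟩, hb1, hb2⟩, hab⟩ := hpq
    rw [Finset.mem_biUnion]
    refine ⟨pq.1, Finset.mem_Icc.mpr ⟨ha1, ha2⟩, ?_⟩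
    rw [Finset.mem_product, Finset.mem_singleton, Finset.mem_Icc]
    exact ⟨rfl, hb1, (Nat.le_div_iff_mul_le ha1).mpr (by rwa [mul_comm])⟩
  have h1 : F.card ≤ ∑ a ∈ Finset.Icc 1 n, (n / a) := by
    refine (Finset.card_le_card hsub).trans ((Finset.card_biUnion_le).trans (le_of_eq ?_))
    refine Finset.sum_congr rfl fun a _ => ?_
    rw [Finset.card_product, Finset.card_singleton, one_mul, Nat.card_Icc,
      Nat.add_sub_cancel]
  have hharm : ∑ a ∈ Finset.Icc 1 n, ((a:ℝ))⁻¹ ≤ 1 + Real.log n := by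
    have h2 := harmonic_le_one_add_log n
    rw [harmonic_eq_sum_Icc] at h2
    push_cast at h2
    exact h2
  calc (F.card : ℝ) ≤ ((∑ a ∈ Finset.Icc 1 n, (n / a) : ℕ) : ℝ) := by exact_mod_cast h1
    _ = ∑ a ∈ Finset.Icc 1 n, (((n / a : ℕ)) : ℝ) := by push_cast; rfl
    _ ≤ ∑ a ∈ Finset.Icc 1 n, (n:ℝ) * ((a:ℝ))⁻¹ := by
        refine Finset.sum_le_sum fun a ha => ?_
        calc (((n / a : ℕ)) : ℝ) ≤ (n:ℝ) / (a:ℝ) := Nat.cast_div_le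
          _ = (n:ℝ) * ((a:ℝ))⁻¹ := div_eq_mul_inv _ _
    _ = (n:ℝ) * ∑ a ∈ Finset.Icc 1 n, ((a:ℝ))⁻¹ := by rw [Finset.mul_sum]
    _ ≤ (n:ℝ) * (1 + Real.log n) := by
        refine mul_le_mul_of_nonneg_left hharm (by positivity)

/-- There is a constant `C > 0` such that for all `n ≥ 2`, the number of
additive subgroups `Δ` of `ℝ` with `c(ℤ, Δ) ≤ n` is at most `C * n * log n`,
where `ℤ = zmultiples 1`. -/
theorem commGrowth_int_upper_bound :
    ∃ C : ℝ, 0 < C ∧ ∀ n : ℕ, 2 ≤ n →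
      (Nat.card {Δ : AddSubgroup ℝ |
          addCommIndex (AddSubgroup.zmultiples (1 : ℝ)) Δ ≠ 0 ∧
          addCommIndex (AddSubgroup.zmultiples (1 : ℝ)) Δ ≤ n} : ℝ) ≤
        C * n * Real.log n := by
  refine ⟨3, by norm_num, fun n hn => ?_⟩
  set S := {Δ : AddSubgroup ℝ |
      addCommIndex (AddSubgroup.zmultiples (1 : ℝ)) Δ ≠ 0 ∧
      addCommIndex (AddSubgroup.zmultiples (1 : ℝ)) Δ ≤ n} with hS
  set F := (Finset.Icc 1 n ×ˢ Finset.Icc 1 n).filter (fun pq => pq.1 * pq.2 ≤ n) with hF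
  have key : S ⊆ (fun pq : ℕ × ℕ => zmultiples ((pq.1:ℝ)/pq.2)) '' ↑F := by
    rintro Δ ⟨hne, hle⟩
    obtain ⟨p, q, hp, hq, heq, hΔ⟩ := structure_lemma Δ hne
    have hpq : p * q ≤ n := heq ▸ hle
    refine ⟨(p, q), ?_, hΔ.symm⟩
    rw [Finset.mem_coe, hF, Finset.mem_filter, Finset.mem_product, Finset.mem_Icc, Finset.mem_Icc]
    refine ⟨⟨⟨hp, ?_⟩, hq, ?_⟩, hpq⟩
    · calc p ≤ p * q := Nat.le_mul_of_pos_right p hq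
        _ ≤ n := hpq
    · calc q ≤ p * q := Nat.le_mul_of_pos_left q hp
        _ ≤ n := hpq
  have h1 : (Nat.card ↥S : ℝ) ≤ (F.card : ℝ) := by
    have hfin : ((fun pq : ℕ × ℕ => zmultiples ((pq.1:ℝ)/pq.2)) '' ↑F).Finite :=
      Set.Finite.image _ (F.finite_toSet)
    have hc1 : S.ncard ≤ ((fun pq : ℕ × ℕ => zmultiples ((pq.1:ℝ)/pq.2)) '' ↑F).ncard :=
      Set.ncard_le_ncard key hfin
    have hc2 : ((fun pq : ℕ × ℕ => zmultiples ((pq.1:ℝ)/pq.2)) '' ↑F).ncard ≤ (↑F : Set (ℕ × ℕ)).ncard :=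
      Set.ncard_image_le F.finite_toSet
    rw [Set.ncard_coe_finset] at hc2
    rw [Nat.card_coe_set_eq]
    exact_mod_cast hc1.trans hc2
  refine (h1.trans (count_bound n)).trans ?_
  have hn2 : (2:ℝ) ≤ (n:ℝ) := by exact_mod_cast hn
  have hlog2 : (0.6931471803:ℝ) < Real.log 2 := Real.log_two_gt_d9
  have hlogmono : Real.log 2 ≤ Real.log n := Real.log_le_log (by norm_num) hn2
  have hlog : (1:ℝ) ≤ 2 * Real.log n := by nlinarith
  have hn0 : (0:ℝ) ≤ (n:ℝ) := by linarith
  nlinarith [mul_nonneg hn0 (by nlinarith : (0:ℝ) ≤ 2 * Real.log n - 1)]
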